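/- arXiv:1711.07631 — 9 statements merged into one kernel-verified Lean document; each statement's English description precedes it below -/
import Mathlib

section
/- Let U : Fin n → Finset (Fin θ) be a fractional repetition code in which every packet has replication factor exactly ρ with ρ ≥ 2, and suppose the simple graph G on Fin n, in which distinct i and i' are adjacent if and only if U i ∩ U i' is nonempty, is connected. Then (ρ − 1) * (∑ i, (U i).card) ≥ ρ * (n − 1). -/
private lemma fr_exists_adj_closer {V : Type*} (G : SimpleGraph V) (hconn : G.Connected)
    (v0 v : V) (hv : v ≠ v0) :
    ∃ u, G.Adj v u ∧ G.dist v0 u < G.dist v0 v := by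
  obtain ⟨w, hw⟩ := (hconn v v0).exists_walk_length_eq_dist
  cases w with
  | nil => exact absurd rfl hv
  | cons h p =>
    rename_i u
    refine ⟨u, h, ?_⟩
    have h2 : G.dist u v0 ≤ p.length := SimpleGraph.dist_le p
    rw [SimpleGraph.Walk.length_cons] at hw
    have hc1 : G.dist v0 u = G.dist u v0 := SimpleGraph.dist_comm
    have hc2 : G.dist v0 v = G.dist v v0 := SimpleGraph.dist_comm
    have hd : G.dist v v0 = p.length + 1 := hw.symm
    omega

/-- For a connected FR code in which every packet has replication factor exactly
`ρ ≥ 2`, we have `(ρ - 1) * ∑ i, (U i).card ≥ ρ * (n - 1)`. -/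
theorem fr_connected_sum_storage_bound (n θ ρ : ℕ) (U : Fin n → Finset (Fin θ))
    (hρ2 : 2 ≤ ρ)
    (hρ : ∀ j : Fin θ, (Finset.univ.filter (fun i => j ∈ U i)).card = ρ)
    (hconn : (SimpleGraph.fromRel
        (fun i i' : Fin n => (U i ∩ U i').Nonempty)).Connected) :
    ρ * (n - 1) ≤ (ρ - 1) * ∑ i, (U i).card := by
  classical
  set G := SimpleGraph.fromRel (fun i i' : Fin n => (U i ∩ U i').Nonempty) with hG
  -- total sum equals θ * ρ by double counting
  have hsum : ∑ i, (U i).card = θ * ρ := by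
    have : ∑ i, (U i).card = ∑ i : Fin n, ∑ j : Fin θ, if j ∈ U i then 1 else 0 := by
      refine Finset.sum_congr rfl fun i _ => ?_
      rw [← Finset.card_filter]
      congr 1
      simp [Finset.filter_mem_eq_inter]
    rw [this, Finset.sum_comm]
    have : ∀ j : Fin θ, (∑ i : Fin n, if j ∈ U i then 1 else 0) = ρ := by
      intro j
      rw [← Finset.card_filter]
      exact hρ j
    rw [Finset.sum_congr rfl fun j _ => this j, Finset.sum_const, Finset.card_univ,
      Fintype.card_fin, smul_eq_mul]
  rcases Nat.lt_or_ge n 2 with hn | hn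
  · interval_cases n <;> simp
  -- n ≥ 2 : key claim n - 1 ≤ θ * (ρ - 1)
  have hkey : n - 1 ≤ θ * (ρ - 1) := by
    have hn0 : 0 < n := by omega
    set v0 : Fin n := ⟨0, hn0⟩ with hv0
    -- every v ≠ v0 has a packet witnessing an edge to a closer vertex
    have hex : ∀ v : Fin n, v ≠ v0 → ∃ j : Fin θ, j ∈ U v ∧
        ∃ u : Fin n, j ∈ U u ∧ G.dist v0 u < G.dist v0 v := by
      intro v hv
      obtain ⟨u, hadj, hlt⟩ := fr_exists_adj_closer G hconn v0 v hv
      rw [hG, SimpleGraph.fromRel_adj] at hadj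
      obtain ⟨hne, hrel⟩ := hadj
      rcases hrel with h | h <;> obtain ⟨j, hj⟩ := h <;>
        simp only [Finset.mem_inter] at hj
      · exact ⟨j, hj.1, u, hj.2, hlt⟩
      · exact ⟨j, hj.2, u, hj.1, hlt⟩
    have hθ : 0 < θ := by
      obtain ⟨v, hv⟩ : ∃ v : Fin n, v ≠ v0 := by
        refine ⟨⟨1, by omega⟩, ?_⟩
        simp [hv0, Fin.ext_iff]
      obtain ⟨j, _⟩ := hex v hv
      exact Fin.pos j
    haveI : Nonempty (Fin θ) := ⟨⟨0, hθ⟩⟩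
    -- choose packet assignment
    set F : Fin n → Fin θ := fun v =>
      if h : ∃ j : Fin θ, j ∈ U v ∧ ∃ u : Fin n, j ∈ U u ∧ G.dist v0 u < G.dist v0 v
      then h.choose else Classical.arbitrary _ with hF
    have hcard : (Finset.univ.erase v0).card =
        ∑ j : Fin θ, ((Finset.univ.erase v0).filter (fun v => F v = j)).card := by
      exact Finset.card_eq_sum_card_fiberwise (fun v _ => Finset.mem_univ (F v))
    have hfib : ∀ j : Fin θ,
        ((Finset.univ.erase v0).filter (fun v => F v = j)).card ≤ ρ - 1 := by
      intro j
      set Sj := Finset.univ.filter (fun i => j ∈ U i) with hSj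
      have hSne : Sj.Nonempty := by
        rw [← Finset.card_pos, hSj, hρ j]; omega
      -- minimizer of dist v0 over Sj
      obtain ⟨m, hmS, hm⟩ := Sj.exists_min_image (fun u => G.dist v0 u) hSne
      have hsub : (Finset.univ.erase v0).filter (fun v => F v = j) ⊆ Sj.erase m := by
        intro v hv
        simp only [Finset.mem_filter, Finset.mem_erase, Finset.mem_univ, and_true] at hv
        obtain ⟨hvne, hFv⟩ := hv
        have h := hex v hvne
        have hspec := h.choose_spec
        rw [hF] at hFv
        simp only [dif_pos h] at hFv
        rw [hFv] at hspec
        obtain ⟨hjv, u, hju, hlt⟩ := hspec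
        have hmu : G.dist v0 m ≤ G.dist v0 u :=
          hm u (by simp [hSj, hju])
        refine Finset.mem_erase.mpr ⟨?_, by simp [hSj, hjv]⟩
        intro hvm
        subst hvm
        omega
      calc ((Finset.univ.erase v0).filter (fun v => F v = j)).card
          ≤ (Sj.erase m).card := Finset.card_le_card hsub
        _ ≤ Sj.card - 1 := by
            rw [Finset.card_erase_of_mem hmS]
        _ = ρ - 1 := by rw [hSj, hρ j]
    have h1 : (Finset.univ.erase v0).card = n - 1 := by
      rw [Finset.card_erase_of_mem (Finset.mem_univ v0), Finset.card_univ, Fintype.card_fin]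
    calc n - 1 = ∑ j : Fin θ, ((Finset.univ.erase v0).filter (fun v => F v = j)).card := by
          rw [← h1, hcard]
      _ ≤ ∑ _j : Fin θ, (ρ - 1) := Finset.sum_le_sum fun j _ => hfib j
      _ = θ * (ρ - 1) := by simp [Finset.sum_const, Finset.card_univ, mul_comm]
  rw [hsum]
  calc ρ * (n - 1) ≤ ρ * (θ * (ρ - 1)) := Nat.mul_le_mul_left _ hkey
    _ = (ρ - 1) * (θ * ρ) := by ring
end

section
/- Let X be a type with decidable equality and let A, B : Fin m → Finset X be two families of finite sets such that for all i, j : Fin m, A i ∩ B j = ∅ if and only if i = j. Then ∑ j, ((((A j).card + (B j).card).choose (A j).card : ℚ))⁻¹ ≤ 1. -/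
private lemma setPair_term_le_one {a b : ℕ} : (((a + b).choose a : ℚ))⁻¹ ≤ 1 := by
  have h : 1 ≤ (a + b).choose a := (Nat.choose_pos (Nat.le_add_right a b))
  have h' : (1 : ℚ) ≤ ((a + b).choose a : ℚ) := by exact_mod_cast h
  exact inv_le_one_of_one_le₀ h'

/-- Key binomial identity: for `b ≥ 1`,
`b * C(a+b,a) ⁻¹-style relation`: `b * C(a+b, a) = (a+b) * C(a+b-1, a)`. -/
private lemma choose_identity (a b : ℕ) (hb : 1 ≤ b) :
    (b : ℚ) * (((a + (b - 1)).choose a : ℚ))⁻¹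
      = ((a + b : ℕ) : ℚ) * (((a + b).choose a : ℚ))⁻¹ := by
  have hab1 : a + (b - 1) = a + b - 1 := by omega
  have hnat : (a + b) * ((a + b - 1).choose (b - 1)) = (a + b).choose b * b := by
    have := Nat.add_one_mul_choose_eq (a + b - 1) (b - 1)
    rw [show a + b - 1 + 1 = a + b from by omega, show b - 1 + 1 = b from by omega] at this
    exact this
  have hsymm1 : (a + b - 1).choose (b - 1) = (a + b - 1).choose a := by
    have hk : a ≤ a + b - 1 := by omega
    have := Nat.choose_symm hk
    rwa [show a + b - 1 - a = b - 1 from by omega] at this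
  have hsymm2 : (a + b).choose b = (a + b).choose a := by
    have := Nat.choose_symm (Nat.le_add_right a b)
    rwa [show a + b - a = b from by omega] at this
  rw [hsymm1, hsymm2] at hnat
  rw [hab1]
  have hq : ((a + b : ℕ) : ℚ) * ((a + b - 1).choose a : ℚ)
      = ((a + b).choose a : ℚ) * (b : ℚ) := by exact_mod_cast hnat
  have h1 : ((a + b - 1).choose a : ℚ) ≠ 0 := by
    have : 0 < (a + b - 1).choose a := Nat.choose_pos (by omega)
    exact_mod_cast this.ne'
  have h2 : ((a + b).choose a : ℚ) ≠ 0 := by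
    have : 0 < (a + b).choose a := Nat.choose_pos (Nat.le_add_right a b)
    exact_mod_cast this.ne'
  rw [inv_eq_one_div, inv_eq_one_div, mul_one_div, mul_one_div, div_eq_div_iff h1 h2]
  linear_combination -hq


private lemma setPair_sum_le_card {X : Type*} [DecidableEq X] {ι : Type*}
    (s : Finset ι) (A B : ι → Finset X) :
    ∑ j ∈ s, ((((A j).card + (B j).card).choose (A j).card : ℚ))⁻¹ ≤ (s.card : ℚ) := by
  calc ∑ j ∈ s, ((((A j).card + (B j).card).choose (A j).card : ℚ))⁻¹
      ≤ ∑ _j ∈ s, (1 : ℚ) := Finset.sum_le_sum (fun j _ => setPair_term_le_one)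
    _ = (s.card : ℚ) := by simp

private lemma setPair_aux {X : Type*} [DecidableEq X] :
    ∀ (n : ℕ) {ι : Type*} (s : Finset ι) (A B : ι → Finset X),
    (s.biUnion (fun j => A j ∪ B j)).card ≤ n →
    (∀ i ∈ s, ∀ j ∈ s, (A i ∩ B j = ∅ ↔ i = j)) →
    ∑ j ∈ s, ((((A j).card + (B j).card).choose (A j).card : ℚ))⁻¹ ≤ 1 := by
  intro n
  induction n with
  | zero =>
    intro ι s A B hcard h
    have hU : s.biUnion (fun j => A j ∪ B j) = ∅ :=
      Finset.card_eq_zero.mp (Nat.le_zero.mp hcard)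
    have hs1 : s.card ≤ 1 := by
      apply Finset.card_le_one.mpr
      intro a ha b hb
      apply (h a ha b hb).mp
      apply Finset.eq_empty_iff_forall_notMem.mpr
      intro x hx
      have : x ∈ s.biUnion (fun j => A j ∪ B j) := by
        refine Finset.mem_biUnion.mpr ⟨a, ha, ?_⟩
        exact Finset.mem_union_left _ (Finset.mem_inter.mp hx).1
      rw [hU] at this
      exact absurd this (Finset.notMem_empty x)
    calc ∑ j ∈ s, ((((A j).card + (B j).card).choose (A j).card : ℚ))⁻¹
        ≤ (s.card : ℚ) := setPair_sum_le_card s A B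
      _ ≤ 1 := by exact_mod_cast hs1
  | succ n ih =>
    intro ι s A B hcard h
    by_cases hs1 : s.card ≤ 1
    · calc ∑ j ∈ s, ((((A j).card + (B j).card).choose (A j).card : ℚ))⁻¹
          ≤ (s.card : ℚ) := setPair_sum_le_card s A B
        _ ≤ 1 := by exact_mod_cast hs1
    push_neg at hs1
    -- every `B i` is nonempty
    have hBne : ∀ i ∈ s, (B i).Nonempty := by
      intro i hi
      rw [Finset.nonempty_iff_ne_empty]
      intro hB
      have hall : ∀ j ∈ s, j = i := by
        intro j hj
        exact (h j hj i hi).mp (by rw [hB, Finset.inter_empty])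
      have : s.card ≤ 1 := Finset.card_le_one.mpr
        (fun a ha b hb => (hall a ha).trans (hall b hb).symm)
      omega
    set U := s.biUnion (fun j => A j ∪ B j) with hUdef
    have hAU : ∀ i ∈ s, A i ⊆ U := by
      intro i hi x hx
      exact Finset.mem_biUnion.mpr ⟨i, hi, Finset.mem_union_left _ hx⟩
    have hBU : ∀ i ∈ s, B i ⊆ U := by
      intro i hi x hx
      exact Finset.mem_biUnion.mpr ⟨i, hi, Finset.mem_union_right _ hx⟩
    have hUne : U.Nonempty := by
      obtain ⟨i, hi⟩ := Finset.card_pos.mp (by omega : 0 < s.card)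
      obtain ⟨x, hx⟩ := hBne i hi
      exact ⟨x, hBU i hi hx⟩
    have hupos : 0 < U.card := Finset.card_pos.mpr hUne
    -- key step: apply the induction hypothesis for every `x ∈ U`
    have key : ∀ x ∈ U,
        ∑ i ∈ s.filter (fun i => x ∉ A i),
          ((((A i).card + ((B i).erase x).card).choose (A i).card : ℚ))⁻¹ ≤ 1 := by
      intro x hx
      apply ih
      · have hsub : (s.filter (fun i => x ∉ A i)).biUnion
            (fun j => A j ∪ (B j).erase x) ⊆ U.erase x := by
          intro y hy
          obtain ⟨i, hi, hyi⟩ := Finset.mem_biUnion.mp hy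
          obtain ⟨his, hxA⟩ := Finset.mem_filter.mp hi
          rcases Finset.mem_union.mp hyi with hyA | hyB
          · exact Finset.mem_erase.mpr ⟨fun e => hxA (e ▸ hyA), hAU i his hyA⟩
          · obtain ⟨hyx, hyB'⟩ := Finset.mem_erase.mp hyB
            exact Finset.mem_erase.mpr ⟨hyx, hBU i his hyB'⟩
        have h1 := Finset.card_le_card hsub
        have h2 := Finset.card_erase_of_mem hx
        omega
      · intro i hi j hj
        obtain ⟨his, hxAi⟩ := Finset.mem_filter.mp hi
        obtain ⟨hjs, hxAj⟩ := Finset.mem_filter.mp hj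
        constructor
        · intro hij
          by_contra hne
          have h1 : A i ∩ B j ≠ ∅ := fun e => hne ((h i his j hjs).mp e)
          obtain ⟨y, hy⟩ := Finset.nonempty_iff_ne_empty.mpr h1
          obtain ⟨hyA, hyB⟩ := Finset.mem_inter.mp hy
          have hyx : y ≠ x := fun e => hxAi (e ▸ hyA)
          have : y ∈ A i ∩ (B j).erase x :=
            Finset.mem_inter.mpr ⟨hyA, Finset.mem_erase.mpr ⟨hyx, hyB⟩⟩
          rw [hij] at this
          exact absurd this (Finset.notMem_empty y)
        · rintro rfl
          have h0 : A i ∩ B i = ∅ := (h i his i his).mpr rfl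
          apply Finset.eq_empty_iff_forall_notMem.mpr
          intro y hy
          obtain ⟨hyA, hyB⟩ := Finset.mem_inter.mp hy
          have : y ∈ A i ∩ B i :=
            Finset.mem_inter.mpr ⟨hyA, (Finset.mem_erase.mp hyB).2⟩
          rw [h0] at this
          exact absurd this (Finset.notMem_empty y)
    -- sum the key inequality over all x ∈ U
    have total : ∑ x ∈ U, ∑ i ∈ s.filter (fun i => x ∉ A i),
        ((((A i).card + ((B i).erase x).card).choose (A i).card : ℚ))⁻¹
          ≤ (U.card : ℚ) := by
      calc ∑ x ∈ U, ∑ i ∈ s.filter (fun i => x ∉ A i),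
            ((((A i).card + ((B i).erase x).card).choose (A i).card : ℚ))⁻¹
          ≤ ∑ _x ∈ U, (1 : ℚ) := Finset.sum_le_sum key
        _ = (U.card : ℚ) := by simp
    -- swap the order of summation
    have swap : ∑ x ∈ U, ∑ i ∈ s.filter (fun i => x ∉ A i),
        ((((A i).card + ((B i).erase x).card).choose (A i).card : ℚ))⁻¹
        = ∑ i ∈ s, ∑ x ∈ U \ A i,
          ((((A i).card + ((B i).erase x).card).choose (A i).card : ℚ))⁻¹ := by
      exact Finset.sum_comm' (fun x i => by
        simp only [Finset.mem_filter, Finset.mem_sdiff]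
        tauto)
    -- compute the inner sum for each i
    have inner : ∀ i ∈ s, ∑ x ∈ U \ A i,
        ((((A i).card + ((B i).erase x).card).choose (A i).card : ℚ))⁻¹
        = (U.card : ℚ) * ((((A i).card + (B i).card).choose (A i).card : ℚ))⁻¹ := by
      intro i hi
      have hdisj : Disjoint (A i) (B i) :=
        Finset.disjoint_iff_inter_eq_empty.mpr ((h i hi i hi).mpr rfl)
      have hBsub : B i ⊆ U \ A i := by
        intro y hy
        exact Finset.mem_sdiff.mpr ⟨hBU i hi hy, fun hyA =>
          (Finset.disjoint_left.mp hdisj hyA) hy⟩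
      rw [← Finset.sum_sdiff hBsub]
      have e1 : ∑ x ∈ (U \ A i) \ B i,
          ((((A i).card + ((B i).erase x).card).choose (A i).card : ℚ))⁻¹
          = (((U \ A i) \ B i).card : ℚ)
            * ((((A i).card + (B i).card).choose (A i).card : ℚ))⁻¹ := by
        rw [Finset.sum_congr rfl (fun x hx => ?_), Finset.sum_const, nsmul_eq_mul]
        have hxB : x ∉ B i := (Finset.mem_sdiff.mp hx).2
        rw [Finset.erase_eq_of_notMem hxB]
      have e2 : ∑ x ∈ B i,
          ((((A i).card + ((B i).erase x).card).choose (A i).card : ℚ))⁻¹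
          = ((B i).card : ℚ)
            * ((((A i).card + ((B i).card - 1)).choose (A i).card : ℚ))⁻¹ := by
        rw [Finset.sum_congr rfl (fun x hx => ?_), Finset.sum_const, nsmul_eq_mul]
        rw [Finset.card_erase_of_mem hx]
      rw [e1, e2]
      have hbpos : 1 ≤ (B i).card := Finset.card_pos.mpr (hBne i hi)
      rw [choose_identity (A i).card (B i).card hbpos]
      have hcard1 : ((U \ A i) \ B i).card = U.card - (A i).card - (B i).card := by
        rw [Finset.card_sdiff_of_subset hBsub, Finset.card_sdiff_of_subset (hAU i hi)]
      have hle : (A i).card + (B i).card ≤ U.card := by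
        have := Finset.card_le_card (Finset.union_subset (hAU i hi) (hBU i hi))
        rwa [Finset.card_union_of_disjoint hdisj] at this
      rw [hcard1]
      rw [← add_mul]
      congr 1
      have : U.card - (A i).card - (B i).card + ((A i).card + (B i).card) = U.card := by
        omega
      exact_mod_cast congrArg (Nat.cast : ℕ → ℚ) this
    rw [swap, Finset.sum_congr rfl inner, ← Finset.mul_sum] at total
    have hupos' : (0 : ℚ) < (U.card : ℚ) := by exact_mod_cast hupos
    exact (mul_le_iff_le_one_right hupos').mp total

/-- Bollobás-type set-pair inequality: if `A i ∩ B j = ∅ ↔ i = j`, then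
`∑ j, 1 / C(|A j| + |B j|, |A j|) ≤ 1`. -/
theorem setPair_inequality {X : Type*} [DecidableEq X] (m : ℕ)
    (A B : Fin m → Finset X)
    (h : ∀ i j : Fin m, A i ∩ B j = ∅ ↔ i = j) :
    ∑ j, ((((A j).card + (B j).card).choose (A j).card : ℚ))⁻¹ ≤ 1 :=
  setPair_aux _ Finset.univ A B le_rfl (fun i _ j _ => h i j)
end

section
/- Let U : Fin n → Finset (Fin θ) be a fractional repetition code such that (U i ∩ U i').card ≤ 1 for all distinct i, i' : Fin n. Then ∑ i : Fin n, ((U i).card).choose 2 ≤ θ.choose 2. -/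
/-- For a universally good FR code (any two distinct nodes share at most
one packet), `∑ i, C(α_i, 2) ≤ C(θ, 2)`. -/
theorem fr_universally_good_storage_bound (n θ : ℕ)
    (U : Fin n → Finset (Fin θ))
    (h : ∀ i i' : Fin n, i ≠ i' → (U i ∩ U i').card ≤ 1) :
    ∑ i : Fin n, ((U i).card).choose 2 ≤ θ.choose 2 := by
  classical
  have hdisj : ∀ i i' : Fin n, i ≠ i' →
      Disjoint ((U i).powersetCard 2) ((U i').powersetCard 2) := by
    intro i i' hne
    rw [Finset.disjoint_left]
    intro s hs hs'
    rw [Finset.mem_powersetCard] at hs hs'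
    have hsub : s ⊆ U i ∩ U i' := Finset.subset_inter hs.1 hs'.1
    have := (Finset.card_le_card hsub).trans (h i i' hne)
    omega
  calc ∑ i : Fin n, ((U i).card).choose 2
      = ∑ i : Fin n, ((U i).powersetCard 2).card := by
        simp [Finset.card_powersetCard]
    _ = ((Finset.univ : Finset (Fin n)).biUnion
          (fun i => (U i).powersetCard 2)).card := by
        rw [Finset.card_biUnion]
        intro i _ i' _ hne
        exact hdisj i i' hne
    _ ≤ ((Finset.univ : Finset (Fin θ)).powersetCard 2).card := by
        apply Finset.card_le_card
        intro s hs
        rw [Finset.mem_biUnion] at hs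
        obtain ⟨i, _, hs⟩ := hs
        rw [Finset.mem_powersetCard] at hs ⊢
        exact ⟨Finset.subset_univ s, hs.2⟩
    _ = θ.choose 2 := by simp [Finset.card_powersetCard]
end

section
/- Let U : Fin n → Finset (Fin θ) be a fractional repetition code such that (U i ∩ U i').card ≤ 1 for all distinct i, i' : Fin n, and suppose every packet has replication factor exactly ρ, i.e. for every j : Fin θ the number of indices i with j ∈ U i equals ρ. Then θ * (ρ * (ρ − 1)) ≤ n * (n − 1). -/
/-- For a universally good FR code with uniform packet replication factor `ρ`,
`θ * ρ * (ρ - 1) ≤ n * (n - 1)`. -/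
theorem fr_universally_good_uniform_replication (n θ ρ : ℕ)
    (U : Fin n → Finset (Fin θ))
    (h : ∀ i i' : Fin n, i ≠ i' → (U i ∩ U i').card ≤ 1)
    (hρ : ∀ j : Fin θ, (Finset.univ.filter (fun i => j ∈ U i)).card = ρ) :
    θ * (ρ * (ρ - 1)) ≤ n * (n - 1) := by
  have key : ∀ j : Fin θ,
      ((Finset.univ.filter (fun i => j ∈ U i)).offDiag : Finset (Fin n × Fin n))
        = (Finset.univ : Finset (Fin n)).offDiag.filter
            (fun p => j ∈ U p.1 ∧ j ∈ U p.2) := by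
    intro j
    ext p
    simp [Finset.mem_offDiag, and_comm, and_assoc, and_left_comm]
  have hpred : ρ * (ρ - 1) = ρ * ρ - ρ := by
    cases ρ with
    | zero => simp
    | succ k => simp [Nat.succ_mul, Nat.mul_succ]
  calc θ * (ρ * (ρ - 1))
      = ∑ j : Fin θ, ((Finset.univ.filter (fun i => j ∈ U i)).offDiag).card := by
        simp only [Finset.offDiag_card, hρ, hpred]
        simp [mul_comm]
    _ = ∑ j : Fin θ, ∑ p ∈ (Finset.univ : Finset (Fin n)).offDiag,
          (if j ∈ U p.1 ∧ j ∈ U p.2 then 1 else 0) := by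
        refine Finset.sum_congr rfl fun j _ => ?_
        rw [key j, Finset.card_filter]
    _ = ∑ p ∈ (Finset.univ : Finset (Fin n)).offDiag,
          ∑ j : Fin θ, (if j ∈ U p.1 ∧ j ∈ U p.2 then 1 else 0) :=
        Finset.sum_comm
    _ = ∑ p ∈ (Finset.univ : Finset (Fin n)).offDiag, (U p.1 ∩ U p.2).card := by
        refine Finset.sum_congr rfl fun p _ => ?_
        rw [← Finset.card_filter]
        congr 1
        ext j
        simp
    _ ≤ ∑ p ∈ (Finset.univ : Finset (Fin n)).offDiag, 1 := by
        refine Finset.sum_le_sum fun p hp => ?_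
        exact h p.1 p.2 (Finset.mem_offDiag.mp hp).2.2
    _ = n * (n - 1) := by
        rw [Finset.sum_const, smul_eq_mul, mul_one, Finset.offDiag_card]
        cases n with
        | zero => simp
        | succ k => simp [Nat.succ_mul, Nat.mul_succ, Finset.card_univ]
end

section
/- Let U : Fin n → Finset (Fin θ) be a fractional repetition code such that (U i ∩ U i').card ≤ 1 for all distinct i, i' : Fin n. Then ∑ i, (U i).card ≤ θ + n.choose 2. -/
private lemma offDiag_card' {α : Type*} [DecidableEq α] (s : Finset α) :
    s.offDiag.card = s.card * (s.card - 1) := by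
  rw [Finset.offDiag_card]
  rcases s.card with _ | m
  · simp
  · simp [Nat.mul_sub, Nat.mul_succ, Nat.succ_mul]

private lemma two_mul_le_aux (d : ℕ) : 2 * d ≤ 2 + d * (d - 1) := by
  rcases d with _ | _ | k
  · simp
  · simp
  · have h1 : k + 2 - 1 = k + 1 := by omega
    rw [h1]
    nlinarith

private lemma two_choose_two (n : ℕ) : n * (n - 1) = 2 * n.choose 2 := by
  rcases n with _ | m
  · simp
  · rw [Nat.choose_two_right]
    have he : Even ((m + 1) * m) := by
      simpa [Nat.mul_comm] using Nat.even_mul_succ_self m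
    obtain ⟨k, hk⟩ := he
    simp only [Nat.succ_sub_one]
    omega

/-- For a universally good FR code (linear hypergraph),
`∑ i, α_i ≤ θ + C(n, 2)`, i.e. `|𝓔| ≥ ∑ deg(v) - C(|V|, 2)`. -/
theorem fr_universally_good_total_storage (n θ : ℕ)
    (U : Fin n → Finset (Fin θ))
    (h : ∀ i i' : Fin n, i ≠ i' → (U i ∩ U i').card ≤ 1) :
    ∑ i, (U i).card ≤ θ + n.choose 2 := by
  let F : Fin θ → Finset (Fin n) := fun e => Finset.univ.filter (fun i => e ∈ U i)
  -- Step 1: double counting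
  have step1 : ∑ i, (U i).card = ∑ e, (F e).card := by
    calc ∑ i, (U i).card = ∑ i : Fin n, ∑ e : Fin θ, if e ∈ U i then 1 else 0 := by
          refine Finset.sum_congr rfl fun i _ => ?_
          simp [Finset.sum_ite_mem, Finset.univ_inter]
      _ = ∑ e : Fin θ, ∑ i : Fin n, if e ∈ U i then 1 else 0 := Finset.sum_comm
      _ = ∑ e, (F e).card := by
          exact Finset.sum_congr rfl fun e _ => (Finset.card_filter _ _).symm
  -- Step 2: the offDiags are pairwise disjoint
  have disj : ∀ e ∈ (Finset.univ : Finset (Fin θ)), ∀ e' ∈ (Finset.univ : Finset (Fin θ)),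
      e ≠ e' → Disjoint ((F e).offDiag) ((F e').offDiag) := by
    intro e _ e' _ hee
    rw [Finset.disjoint_left]
    rintro ⟨i, i'⟩ hp hp'
    simp only [Finset.mem_offDiag, F, Finset.mem_filter, Finset.mem_univ, true_and] at hp hp'
    have hii' : i ≠ i' := hp.2.2
    have hsub : ({e, e'} : Finset (Fin θ)) ⊆ U i ∩ U i' := by
      intro x hx
      simp only [Finset.mem_insert, Finset.mem_singleton] at hx
      rcases hx with rfl | rfl <;> simp [Finset.mem_inter, hp.1, hp.2.1, hp'.1, hp'.2.1]
    have h2 : ({e, e'} : Finset (Fin θ)).card = 2 := Finset.card_pair hee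
    have := Finset.card_le_card hsub
    have := h i i' hii'
    omega
  have union_sub : (Finset.univ : Finset (Fin θ)).biUnion (fun e => (F e).offDiag) ⊆
      (Finset.univ : Finset (Fin n)).offDiag := by
    intro p hp
    simp only [Finset.mem_biUnion] at hp
    obtain ⟨e, _, hpe⟩ := hp
    simp only [Finset.mem_offDiag, F, Finset.mem_filter] at hpe ⊢
    exact ⟨Finset.mem_univ _, Finset.mem_univ _, hpe.2.2⟩
  have step2 : ∑ e, (F e).card * ((F e).card - 1) ≤ n * (n - 1) := by
    have : ∑ e, (F e).offDiag.card ≤ ((Finset.univ : Finset (Fin n)).offDiag).card := by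
      rw [← Finset.card_biUnion disj]
      exact Finset.card_le_card union_sub
    simp_rw [offDiag_card'] at this
    simpa [Finset.card_univ] using this
  -- combine
  have : 2 * ∑ e, (F e).card ≤ 2 * (θ + n.choose 2) := by
    calc 2 * ∑ e, (F e).card = ∑ e, 2 * (F e).card := by rw [Finset.mul_sum]
      _ ≤ ∑ e, (2 + (F e).card * ((F e).card - 1)) :=
          Finset.sum_le_sum (fun e _ => two_mul_le_aux _)
      _ = 2 * θ + ∑ e, (F e).card * ((F e).card - 1) := by
          rw [Finset.sum_add_distrib]; simp [Finset.card_univ, mul_comm]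
      _ ≤ 2 * θ + n * (n - 1) := by omega
      _ = 2 * (θ + n.choose 2) := by rw [two_choose_two]; ring
  rw [step1]
  omega
end

section
/- Let U : Fin n → Finset (Fin θ) be a fractional repetition code such that (U i ∩ U i').card ≤ 1 for all distinct i, i' : Fin n. Then for every finite set S : Finset (Fin n), ∑ i in S, (U i).card ≤ (S.biUnion U).card + (S.card).choose 2. -/
/-- For a universally good FR code (linear hypergraph), every set `S` of nodes
stores at least `∑_{i ∈ S} α_i - C(|S|, 2)` distinct packets. -/
theorem fr_universally_good_file_size (n θ : ℕ)
    (U : Fin n → Finset (Fin θ))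
    (h : ∀ i i' : Fin n, i ≠ i' → (U i ∩ U i').card ≤ 1)
    (S : Finset (Fin n)) :
    ∑ i ∈ S, (U i).card ≤ (S.biUnion U).card + (S.card).choose 2 := by
  classical
  induction S using Finset.induction_on with
  | empty => simp
  | @insert i T hiT ih =>
    rw [Finset.sum_insert hiT, Finset.biUnion_insert, Finset.card_insert_of_notMem hiT]
    have hch : (T.card + 1).choose 2 = T.card.choose 2 + T.card := by
      simp [Nat.choose_succ_succ, Nat.choose_one_right]; omega
    have hcap : (U i ∩ T.biUnion U).card ≤ T.card := by
      calc (U i ∩ T.biUnion U).card ≤ ((T.biUnion fun j => U i ∩ U j)).card := by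
            apply Finset.card_le_card
            intro x hx
            simp only [Finset.mem_inter, Finset.mem_biUnion] at hx ⊢
            obtain ⟨h1, j, hj, h2⟩ := hx
            exact ⟨j, hj, h1, h2⟩
        _ ≤ ∑ j ∈ T, (U i ∩ U j).card := Finset.card_biUnion_le
        _ ≤ ∑ j ∈ T, 1 := Finset.sum_le_sum fun j hj => h i j (fun e => hiT (e ▸ hj))
        _ = T.card := by simp
    have hunion : (U i).card + (T.biUnion U).card
        ≤ (U i ∪ T.biUnion U).card + T.card := by
      rw [← Finset.card_union_add_card_inter]
      exact Nat.add_le_add_left hcap _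
    have := ih
    omega
end

section
/- Let U : Fin n → Finset (Fin θ) be a fractional repetition code such that (U i ∩ U i').card ≤ 1 for all distinct i, i' : Fin n, suppose the storage capacities are sorted nondecreasingly, i.e. (U i).card ≤ (U i').card whenever i ≤ i', and let k ≤ n. Then for every S : Finset (Fin n) with S.card = k, (S.biUnion U).card + (k.choose 2) ≥ ∑ i in (Finset.univ.filter (fun i : Fin n => (i : ℕ) < k)), (U i).card. In other words, the minimum over all k-element node sets S of the number of distinct packets stored on S is at least the sum of the k smallest storage capacities minus C(k,2). -/
lemma fr_aux (n θ : ℕ) (U : Fin n → Finset (Fin θ))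
    (h : ∀ i i' : Fin n, i ≠ i' → (U i ∩ U i').card ≤ 1) :
    ∀ S : Finset (Fin n),
      ∑ i ∈ S, (U i).card ≤ (S.biUnion U).card + S.card.choose 2 := by
  intro S
  induction S using Finset.induction_on with
  | empty => simp
  | @insert a S ha ih =>
    rw [Finset.sum_insert ha, Finset.biUnion_insert, Finset.card_insert_of_notMem ha]
    have hunion : ((U a) ∪ S.biUnion U).card + ((U a) ∩ S.biUnion U).card
        = (U a).card + (S.biUnion U).card := Finset.card_union_add_card_inter _ _
    have hinter : ((U a) ∩ S.biUnion U).card ≤ S.card := by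
      rw [Finset.inter_biUnion]
      calc (S.biUnion fun i => U a ∩ U i).card
          ≤ ∑ i ∈ S, (U a ∩ U i).card := Finset.card_biUnion_le
        _ ≤ ∑ _i ∈ S, 1 := Finset.sum_le_sum (fun i hi => h a i (fun he => ha (he ▸ hi)))
        _ = S.card := by simp
    have hch : (S.card + 1).choose 2 = S.card.choose 2 + S.card := by
      rw [Nat.choose_succ_succ]
      simp [Nat.add_comm]
    omega

lemma fin_le_apply {k n : ℕ} (f : Fin k → Fin n) (hf : StrictMono f) :
    ∀ j : Fin k, (j : ℕ) ≤ (f j : ℕ) := by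
  intro ⟨j, hj⟩
  induction j with
  | zero => exact Nat.zero_le _
  | succ m ih =>
    have hm : m < k := Nat.lt_of_succ_lt hj
    have h1 : (m : ℕ) ≤ (f ⟨m, hm⟩ : ℕ) := ih hm
    have h2 : f ⟨m, hm⟩ < f ⟨m + 1, hj⟩ := hf (by simp [Fin.lt_def])
    have h3 := Fin.lt_def.mp h2
    show m + 1 ≤ _
    omega

/-- For a universally good FR code with nondecreasingly sorted storage
capacities, every `k`-element node set stores at least
`∑_{i < k} α_i - C(k, 2)` distinct packets, i.e.
`M(k) ≥ ∑ (k smallest α_i) - C(k, 2)`. -/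
theorem fr_universally_good_sorted_file_size (n θ k : ℕ)
    (U : Fin n → Finset (Fin θ))
    (h : ∀ i i' : Fin n, i ≠ i' → (U i ∩ U i').card ≤ 1)
    (hsorted : ∀ i i' : Fin n, i ≤ i' → (U i).card ≤ (U i').card)
    (hk : k ≤ n)
    (S : Finset (Fin n)) (hS : S.card = k) :
    ∑ i ∈ (Finset.univ.filter (fun i : Fin n => (i : ℕ) < k)), (U i).card
      ≤ (S.biUnion U).card + k.choose 2 := by
  have haux := fr_aux n θ U h S
  rw [hS] at haux
  refine le_trans ?_ haux
  have hS' : ∑ i ∈ S, (U i).card = ∑ j : Fin k, (U (S.orderEmbOfFin hS j)).card := by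
    rw [← Finset.sum_attach S (fun i => (U i).card)]
    exact (Fintype.sum_equiv (S.orderIsoOfFin hS).toEquiv _ _ (fun j => rfl)).symm
  have hfilter : (Finset.univ.filter (fun i : Fin n => (i : ℕ) < k))
      = (Finset.univ : Finset (Fin k)).map (Fin.castLEEmb hk) := by
    ext i
    simp [Fin.castLEEmb, Fin.castLE, Fin.ext_iff]
    exact ⟨fun hi => ⟨⟨i, hi⟩, rfl⟩, fun ⟨a, ha⟩ => ha ▸ a.2⟩
  have hT : ∑ i ∈ (Finset.univ.filter (fun i : Fin n => (i : ℕ) < k)), (U i).card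
      = ∑ j : Fin k, (U (Fin.castLE hk j)).card := by
    rw [hfilter, Finset.sum_map]
    rfl
  rw [hS', hT]
  apply Finset.sum_le_sum
  intro j _
  apply hsorted
  have := fin_le_apply _ (S.orderEmbOfFin hS).strictMono j
  simpa [Fin.le_def] using this
end

section
/- Let α : Fin n → ℕ be nonincreasing (α i ≥ α i' whenever i ≤ i') and let ρ : Fin θ → ℕ. Suppose (1) ∑ j, ρ j = ∑ i, α i, and (2) for every natural number m ≤ n, ∑ j, min (ρ j) m ≥ ∑ i in (Finset.univ.filter (fun i : Fin n => (i : ℕ) < m)), α i. Then there exists a fractional repetition code U : Fin n → Finset (Fin θ) such that (U i).card = α i for every i and, for every j, the number of indices i with j ∈ U i equals ρ j. -/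
private lemma fr_exists_top {θ : ℕ} (ρ : Fin θ → ℕ) :
    ∀ a : ℕ, a ≤ θ → ∃ S : Finset (Fin θ), S.card = a ∧
      ∀ j ∈ S, ∀ j' ∉ S, ρ j' ≤ ρ j := by
  intro a
  induction a with
  | zero => intro _; exact ⟨∅, rfl, by simp⟩
  | succ a ih =>
    intro ha
    obtain ⟨S, hScard, hStop⟩ := ih (Nat.le_of_succ_le ha)
    have hne : (Sᶜ : Finset (Fin θ)).Nonempty := by
      rw [← Finset.card_pos, Finset.card_compl, Fintype.card_fin, hScard]
      omega
    obtain ⟨x, hx, hxmax⟩ := Finset.exists_max_image Sᶜ ρ hne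
    have hxS : x ∉ S := Finset.mem_compl.mp hx
    refine ⟨insert x S, ?_, ?_⟩
    · rw [Finset.card_insert_of_notMem hxS, hScard]
    · intro j hj j' hj'
      have hj'S : j' ∉ S := fun h => hj' (Finset.mem_insert_of_mem h)
      rcases Finset.mem_insert.mp hj with rfl | hjS
      · exact hxmax j' (Finset.mem_compl.mpr hj'S)
      · exact hStop j hjS j' hj'S

private lemma fr_sum_filter_lt_succ {n : ℕ} (α : Fin (n + 1) → ℕ) (m : ℕ) :
    ∑ i ∈ Finset.univ.filter (fun i : Fin (n + 1) => (i : ℕ) < m + 1), α i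
      = α 0 + ∑ i ∈ Finset.univ.filter (fun i : Fin n => (i : ℕ) < m), α i.succ := by
  rw [Finset.sum_filter, Finset.sum_filter, Fin.sum_univ_succ]
  simp [Nat.succ_lt_succ_iff]

private lemma fr_sum_filter_shift_le {n : ℕ} (α : Fin (n + 1) → ℕ)
    (hα : ∀ i i' : Fin (n + 1), i ≤ i' → α i' ≤ α i) (m : ℕ) (hm : m ≤ n) :
    ∑ i ∈ Finset.univ.filter (fun i : Fin n => (i : ℕ) < m), α i.succ
      ≤ ∑ i ∈ Finset.univ.filter (fun i : Fin (n + 1) => (i : ℕ) < m), α i := by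
  rw [Finset.sum_filter, Finset.sum_filter, Fin.sum_univ_castSucc]
  have hlast : ¬ ((Fin.last n : ℕ) < m) := by simp [Fin.val_last]; omega
  rw [if_neg hlast, add_zero]
  apply Finset.sum_le_sum
  intro i _
  simp only [Fin.coe_castSucc]
  split_ifs with h
  · exact hα i.castSucc i.succ Fin.castSucc_lt_succ.le
  · exact le_refl 0

private lemma fr_aux_s17 (θ : ℕ) : ∀ (n : ℕ) (α : Fin n → ℕ) (ρ : Fin θ → ℕ),
    (∀ i i' : Fin n, i ≤ i' → α i' ≤ α i) →
    (∑ j, ρ j = ∑ i, α i) →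
    (∀ m : ℕ, m ≤ n →
      ∑ i ∈ (Finset.univ.filter (fun i : Fin n => (i : ℕ) < m)), α i
        ≤ ∑ j, min (ρ j) m) →
    ∃ U : Fin n → Finset (Fin θ),
      (∀ i, (U i).card = α i) ∧
      (∀ j : Fin θ, (Finset.univ.filter (fun i => j ∈ U i)).card = ρ j) := by
  intro n
  induction n with
  | zero =>
    intro α ρ _ h1 _
    have hz : ∀ j, ρ j = 0 := by
      have hs : ∑ j, ρ j = 0 := by simpa using h1
      intro j
      exact Finset.sum_eq_zero_iff.mp hs j (Finset.mem_univ j)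
    refine ⟨fun i => i.elim0, fun i => i.elim0, fun j => ?_⟩
    rw [hz j]
    simp [Finset.filter_eq_empty_iff]
  | succ n ih =>
    intro α ρ hα h1 h2
    set a := α 0 with ha_def
    -- the first filter sum is α 0
    have hfilter1 : ∑ i ∈ Finset.univ.filter (fun i : Fin (n + 1) => (i : ℕ) < 1), α i = a := by
      rw [fr_sum_filter_lt_succ α 0]
      simp [ha_def]
    -- min (ρ j) 1 as an indicator
    have hmin1 : ∀ j, min (ρ j) 1 = if 1 ≤ ρ j then 1 else 0 := by
      intro j; rw [Nat.min_def]; split_ifs <;> omega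
    have hcard1 : ∑ j, min (ρ j) 1
        = (Finset.univ.filter (fun j => 1 ≤ ρ j)).card := by
      rw [Finset.card_filter]
      exact Finset.sum_congr rfl fun j _ => hmin1 j
    have h21 := h2 1 (by omega)
    rw [hfilter1] at h21
    have haθ : a ≤ θ := by
      calc a ≤ ∑ j, min (ρ j) 1 := h21
        _ ≤ ∑ _j : Fin θ, 1 := Finset.sum_le_sum fun j _ => min_le_right _ _
        _ = θ := by simp
    obtain ⟨S, hScard, hStop⟩ := fr_exists_top ρ a haθ
    have hpos : ∀ j ∈ S, 1 ≤ ρ j := by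
      intro j₀ hj₀
      by_contra hneg
      have hj₀z : ρ j₀ = 0 := by omega
      have hsub : Finset.univ.filter (fun j => 1 ≤ ρ j) ⊆ S.erase j₀ := by
        intro j hj
        rw [Finset.mem_filter] at hj
        rw [Finset.mem_erase]
        constructor
        · intro h; rw [h] at hj; omega
        · by_contra hjS
          have := hStop j₀ hj₀ j hjS
          omega
      have hcard := Finset.card_le_card hsub
      rw [Finset.card_erase_of_mem hj₀, hScard] at hcard
      have hge1 : 1 ≤ a := by
        rw [← hScard]; exact Finset.card_pos.mpr ⟨j₀, hj₀⟩
      rw [hcard1] at h21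
      omega
    set ρ' : Fin θ → ℕ := fun j => if j ∈ S then ρ j - 1 else ρ j with hρ'_def
    set α' : Fin n → ℕ := fun i => α i.succ with hα'_def
    have hkey : ∀ j, ρ' j + (if j ∈ S then 1 else 0) = ρ j := by
      intro j
      by_cases h : j ∈ S <;> simp only [hρ'_def, h, if_true, if_false, add_zero]
      exact Nat.sub_add_cancel (hpos j h)
    have hindsum : ∑ j, (if j ∈ S then 1 else 0) = a := by
      rw [← hScard]
      simp [Finset.sum_ite_mem]
    have hsum' : ∑ j, ρ' j + a = ∑ j, ρ j := by
      rw [← hindsum, ← Finset.sum_add_distrib]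
      exact Finset.sum_congr rfl fun j _ => hkey j
    have hsumα : ∑ i, α i = a + ∑ i, α' i := by
      rw [Fin.sum_univ_succ]
    have h1' : ∑ j, ρ' j = ∑ i, α' i := by
      rw [h1, hsumα] at hsum'
      omega
    have hα' : ∀ i i' : Fin n, i ≤ i' → α' i' ≤ α' i := by
      intro i i' h
      exact hα i.succ i'.succ (Fin.succ_le_succ_iff.mpr h)
    have h2' : ∀ m : ℕ, m ≤ n →
        ∑ i ∈ (Finset.univ.filter (fun i : Fin n => (i : ℕ) < m)), α' i
          ≤ ∑ j, min (ρ' j) m := by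
      intro m hm
      by_cases hc : ∃ j₀ ∈ S, ρ j₀ ≤ m
      · obtain ⟨j₀, hj₀S, hj₀⟩ := hc
        have hout : ∀ j, j ∉ S → ρ j ≤ m := fun j hj => (hStop j₀ hj₀S j hj).trans hj₀
        have hpt : ∀ j, min (ρ j) (m + 1) ≤ min (ρ' j) m + (if j ∈ S then 1 else 0) := by
          intro j
          by_cases h : j ∈ S <;> simp only [hρ'_def, h, if_true, if_false, add_zero]
          · rw [Nat.min_def, Nat.min_def]; split_ifs <;> omega
          · have := hout j h
            rw [Nat.min_def, Nat.min_def]; split_ifs <;> omega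
        have hA : ∑ j, min (ρ j) (m + 1) ≤ ∑ j, min (ρ' j) m + a := by
          rw [← hindsum, ← Finset.sum_add_distrib]
          exact Finset.sum_le_sum fun j _ => hpt j
        have hB := h2 (m + 1) (by omega)
        rw [fr_sum_filter_lt_succ α m] at hB
        have : a + ∑ i ∈ Finset.univ.filter (fun i : Fin n => (i : ℕ) < m), α' i
            ≤ ∑ j, min (ρ' j) m + a := le_trans hB hA
        omega
      · push_neg at hc
        have heq : ∀ j, min (ρ' j) m = min (ρ j) m := by
          intro j
          by_cases h : j ∈ S <;> simp only [hρ'_def, h, if_true, if_false]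
          have := hc j h
          rw [Nat.min_def, Nat.min_def]; split_ifs <;> omega
        calc ∑ i ∈ Finset.univ.filter (fun i : Fin n => (i : ℕ) < m), α' i
            ≤ ∑ i ∈ Finset.univ.filter (fun i : Fin (n + 1) => (i : ℕ) < m), α i :=
              fr_sum_filter_shift_le α hα m hm
          _ ≤ ∑ j, min (ρ j) m := h2 m (by omega)
          _ = ∑ j, min (ρ' j) m := (Finset.sum_congr rfl fun j _ => (heq j).symm)
    obtain ⟨U', hU'card, hU'rep⟩ := ih α' ρ' hα' h1' h2'
    refine ⟨Fin.cases S U', ?_, ?_⟩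
    · intro i
      induction i using Fin.cases with
      | zero => simpa using hScard
      | succ i => simpa using hU'card i
    · intro j
      rw [Finset.card_filter, Fin.sum_univ_succ]
      simp only [Fin.cases_zero, Fin.cases_succ]
      have hrest : ∑ i : Fin n, (if j ∈ U' i then 1 else 0) = ρ' j := by
        rw [← hU'rep j, Finset.card_filter]
      erw [hrest]
      have := hkey j
      by_cases h : j ∈ S <;> simp [h] at this ⊢ <;> omega

/-- Gale–Ryser type existence condition: if `α` is nonincreasing,
`∑ j, ρ j = ∑ i, α i`, and `∑ j, min (ρ j) m ≥ ∑_{i < m} α i` for all `m ≤ n`,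
then there is an FR code with storage vector `α` and replication vector `ρ`. -/
theorem fr_exists_of_gale_ryser (n θ : ℕ) (α : Fin n → ℕ) (ρ : Fin θ → ℕ)
    (hα : ∀ i i' : Fin n, i ≤ i' → α i' ≤ α i)
    (h1 : ∑ j, ρ j = ∑ i, α i)
    (h2 : ∀ m : ℕ, m ≤ n →
      ∑ i ∈ (Finset.univ.filter (fun i : Fin n => (i : ℕ) < m)), α i
        ≤ ∑ j, min (ρ j) m) :
    ∃ U : Fin n → Finset (Fin θ),
      (∀ i, (U i).card = α i) ∧
      (∀ j : Fin θ, (Finset.univ.filter (fun i => j ∈ U i)).card = ρ j) := by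
  exact fr_aux_s17 θ n α ρ hα h1 h2
end

section
/- Let U : Fin n → Finset (Fin θ) be a fractional repetition code, let α ≥ 1 with (U i).card ≤ α for every i, let 1 ≤ k ≤ n, and let M be the minimum of (S.biUnion U).card over all S : Finset (Fin n) with S.card = k; assume M ≥ 1. Then there exists a set S : Finset (Fin n) of failed nodes with S.card = n + 1 − ⌈M / α⌉ (ceiling division) such that the surviving nodes store fewer than M distinct packets, i.e. (Sᶜ.biUnion U).card < M. Consequently the minimum distance d_min of the code satisfies d_min ≤ n − ⌈M/α⌉ + 1. -/
/-- Singleton-like bound on the minimum distance of an FR code: if `M = M(k)`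
is the file size (the minimum number of distinct packets stored on any `k`
nodes), then some set of `n + 1 - ⌈M/α⌉` failed nodes leaves the surviving
nodes with fewer than `M` distinct packets; consequently
`d_min ≤ n - ⌈M/α⌉ + 1`. -/
theorem fr_min_distance_singleton_bound (n θ α k M : ℕ)
    (U : Fin n → Finset (Fin θ))
    (hα : 1 ≤ α) (hcap : ∀ i : Fin n, (U i).card ≤ α)
    (hk1 : 1 ≤ k) (hkn : k ≤ n)
    (hM : IsLeast {m : ℕ | ∃ S : Finset (Fin n), S.card = k ∧
      (S.biUnion U).card = m} M)
    (hM1 : 1 ≤ M) :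
    (∃ S : Finset (Fin n), S.card = n + 1 - M ⌈/⌉ α ∧
        ((Sᶜ).biUnion U).card < M) ∧
      sInf {c : ℕ | ∃ S : Finset (Fin n), S.card = c ∧
          ((Sᶜ).biUnion U).card < M} ≤ n - M ⌈/⌉ α + 1 := by
  have hα0 : 0 < α := hα
  set q := M ⌈/⌉ α with hq
  -- generic bound on the number of packets on a set of nodes
  have hbound : ∀ T : Finset (Fin n), (T.biUnion U).card ≤ T.card * α := by
    intro T
    calc (T.biUnion U).card ≤ ∑ i ∈ T, (U i).card := Finset.card_biUnion_le
      _ ≤ ∑ _i ∈ T, α := Finset.sum_le_sum fun i _ => hcap i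
      _ = T.card * α := by rw [Finset.sum_const, smul_eq_mul]
  -- q ≥ 1
  have hq1 : 1 ≤ q := by
    by_contra h
    have : q ≤ 0 := by omega
    rw [hq, ceilDiv_le_iff_le_mul hα0] at this
    omega
  -- q ≤ k
  have hqk : q ≤ k := by
    obtain ⟨S, hSk, hScard⟩ := hM.1
    have : M ≤ α * k := by
      rw [← hScard]
      calc (S.biUnion U).card ≤ S.card * α := hbound S
        _ = α * k := by rw [hSk, mul_comm]
    exact (ceilDiv_le_iff_le_mul hα0).2 this
  -- key: (q - 1) * α < M
  have hkey : (q - 1) * α < M := by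
    by_contra h
    have hle : M ≤ α * (q - 1) := by rw [mul_comm]; exact Nat.le_of_not_lt h
    have := (ceilDiv_le_iff_le_mul hα0).2 hle
    omega
  -- choose a set T of q - 1 surviving nodes
  obtain ⟨T, -, hTcard⟩ := Finset.exists_subset_card_eq
    (s := (Finset.univ : Finset (Fin n))) (n := q - 1)
    (by rw [Finset.card_univ, Fintype.card_fin]; omega)
  refine ⟨⟨Tᶜ, ?_, ?_⟩, ?_⟩
  · rw [Finset.card_compl, hTcard, Fintype.card_fin]
    omega
  · rw [compl_compl]
    calc (T.biUnion U).card ≤ T.card * α := hbound T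
      _ = (q - 1) * α := by rw [hTcard]
      _ < M := hkey
  · have hmem : (n + 1 - q) ∈ {c : ℕ | ∃ S : Finset (Fin n), S.card = c ∧
        ((Sᶜ).biUnion U).card < M} := by
      refine ⟨Tᶜ, ?_, ?_⟩
      · rw [Finset.card_compl, hTcard, Fintype.card_fin]; omega
      · rw [compl_compl]
        calc (T.biUnion U).card ≤ T.card * α := hbound T
          _ = (q - 1) * α := by rw [hTcard]
          _ < M := hkey
    have := Nat.sInf_le hmem
    omega
end
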